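/- Let P ≥ 1, let n ≥ 1, let T_A and T_B be tires of size n over [P_∞] := ZMod P ∪ {∞}, and let H_C and H_D be the binary QC-LDPC matrices associated with the model matrices 𝓗_C := [T_A, T_B] and 𝓗_D := [−T_B^T, −T_A^T]. Then H_C and H_D are equivalent up to position-permutation: there exist a permutation matrix P_R of size nP and a permutation matrix P_C of size 2nP such that H_C = P_R · H_D · P_C. -/

import Mathlib

open Matrix

/-- The circulant permutation matrix `I(b)` of size `P` over `F₂`. -/
def circPerm (P : ℕ) (b : ZMod P) : Matrix (Fin P) (Fin P) (ZMod 2) :=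
  Matrix.of fun j l => if ((l : ℕ) : ZMod P) - ((j : ℕ) : ZMod P) = b then 1 else 0

/-- `I(x)` for `x ∈ [P_∞]`, with `I(∞) = 0` (`∞` encoded as `none`). -/
def circPermO (P : ℕ) (x : Option (ZMod P)) : Matrix (Fin P) (Fin P) (ZMod 2) :=
  match x with
  | none => 0
  | some b => circPerm P b

/-- Negation on `[P_∞]`: computed mod `P` on `ZMod P`, and `−∞ = ∞`. -/
def oneg {P : ℕ} (x : Option (ZMod P)) : Option (ZMod P) :=
  x.map fun a => -a

/-- The QC-LDPC matrix associated with a model matrix over `[P_∞]`. -/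
def qcMatrix {P : ℕ} {R C : Type*} (c : R → C → Option (ZMod P)) :
    Matrix (R × Fin P) (C × Fin P) (ZMod 2) :=
  Matrix.of fun r s => circPermO P (c r.1 s.1) r.2 s.2

/-- A tire of size `n` over `[P_∞]`. -/
def IsTire {P n : ℕ} (T : Fin n → Fin n → Option (ZMod P)) : Prop :=
  ∃ t : ZMod n → Option (ZMod P),
    ∀ j l : Fin n, T j l = t (((l : ℕ) : ZMod n) - ((j : ℕ) : ZMod n))

/-- A permutation matrix: a binary matrix with exactly one `1` in each row and
each column. -/
def IsPermMatrix {α : Type*} [Fintype α] (M : Matrix α α (ZMod 2)) : Prop :=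
  (∀ r, (Finset.univ.filter (fun s => M r s = 1)).card = 1) ∧
  (∀ s, (Finset.univ.filter (fun r => M r s = 1)).card = 1)

/- ### Auxiliary material -/

/-- The permutation matrix associated to a permutation. -/
def permMat {α : Type*} [Fintype α] [DecidableEq α] (e : Equiv.Perm α) :
    Matrix α α (ZMod 2) := Matrix.of fun r s => if s = e r then 1 else 0

lemma permMat_isPerm {α : Type*} [Fintype α] [DecidableEq α] (e : Equiv.Perm α) :
    IsPermMatrix (permMat e) := by
  constructor
  · intro r
    have h : (Finset.univ.filter (fun s => permMat e r s = 1)) = {e r} := by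
      ext s; rw [Finset.mem_filter]
      simp only [Finset.mem_filter, Finset.mem_univ, true_and, Finset.mem_singleton,
        permMat, Matrix.of_apply]
      constructor
      · intro h; by_contra hc; rw [if_neg hc] at h; exact zero_ne_one h
      · intro h; rw [if_pos h]
    rw [h, Finset.card_singleton]
  · intro s
    have h : (Finset.univ.filter (fun r => permMat e r s = 1)) = {e.symm s} := by
      ext r; rw [Finset.mem_filter]
      simp only [Finset.mem_filter, Finset.mem_univ, true_and, Finset.mem_singleton,
        permMat, Matrix.of_apply]
      constructor
      · intro h; by_contra hc
        rw [if_neg (fun hh => hc (by rw [hh]; simp))] at h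
        exact zero_ne_one h
      · intro h; rw [if_pos (by rw [h]; simp)]
    rw [h, Finset.card_singleton]

lemma permMat_mul {α β : Type*} [Fintype α] [DecidableEq α] (e : Equiv.Perm α)
    (A : Matrix α β (ZMod 2)) (r : α) (s : β) :
    (permMat e * A) r s = A (e r) s := by
  simp [Matrix.mul_apply, permMat, ite_mul]

lemma mul_permMat {α β : Type*} [Fintype α] [DecidableEq α] (e : Equiv.Perm α)
    (A : Matrix β α (ZMod 2)) (r : β) (s : α) :
    (A * permMat e) r s = A r (e.symm s) := by
  simp only [Matrix.mul_apply, permMat, Matrix.of_apply, mul_ite, mul_one, mul_zero]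
  rw [Finset.sum_eq_single (e.symm s)]
  · simp
  · intro u _ hu
    rw [if_neg (fun hh => hu (by rw [hh]; simp))]
  · simp

/-- Negation on `Fin m` via `ZMod m`. -/
def negFin (m : ℕ) [NeZero m] : Fin m → Fin m :=
  fun i => ⟨(-(((i : ℕ) : ZMod m))).val, ZMod.val_lt _⟩

lemma negFin_cast (m : ℕ) [NeZero m] (i : Fin m) :
    (((negFin m i : ℕ)) : ZMod m) = -((i : ℕ) : ZMod m) := by
  simp [negFin, ZMod.natCast_val, ZMod.cast_id]

lemma negFin_invol (m : ℕ) [NeZero m] : Function.Involutive (negFin m) := by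
  intro i
  have h1 : (((negFin m (negFin m i) : ℕ)) : ZMod m) = ((i : ℕ) : ZMod m) := by
    rw [negFin_cast, negFin_cast, neg_neg]
  apply Fin.ext
  have := congrArg ZMod.val h1
  rwa [ZMod.val_natCast_of_lt (negFin m (negFin m i)).isLt,
    ZMod.val_natCast_of_lt i.isLt] at this

lemma circPermO_neg (P : ℕ) [NeZero P] (x : Option (ZMod P)) (p q : Fin P) :
    circPermO P (oneg x) (negFin P p) (negFin P q) = circPermO P x p q := by
  cases x with
  | none => simp [oneg, circPermO]
  | some b =>
      simp only [oneg, Option.map_some, circPermO, circPerm, Matrix.of_apply]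
      rw [negFin_cast, negFin_cast]
      refine if_congr ?_ rfl rfl
      constructor
      · intro h; linear_combination -h
      · intro h; linear_combination -h

/-- the QC-LDPC matrices `H_C`, `H_D` associated with the model
matrices `[T_A, T_B]` and `[−T_Bᵀ, −T_Aᵀ]` are equivalent up to
position-permutation: `H_C = P_R · H_D · P_C` for some permutation matrices
`P_R` (of size `nP`) and `P_C` (of size `2nP`). -/
theorem tires_codes_equivalent (P n : ℕ) (hP : 1 ≤ P) (hn : 1 ≤ n)
    (TA TB : Fin n → Fin n → Option (ZMod P)) (hA : IsTire TA) (hB : IsTire TB) :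
    ∃ (PR : Matrix (Fin n × Fin P) (Fin n × Fin P) (ZMod 2))
      (PC : Matrix ((Fin n ⊕ Fin n) × Fin P) ((Fin n ⊕ Fin n) × Fin P) (ZMod 2)),
      IsPermMatrix PR ∧ IsPermMatrix PC ∧
      qcMatrix (fun j : Fin n => Sum.elim (fun l => TA j l) (fun l => TB j l)) =
        PR * qcMatrix (fun k : Fin n =>
          Sum.elim (fun l => oneg (TB l k)) (fun l => oneg (TA l k))) * PC := by
  haveI : NeZero n := ⟨by omega⟩
  haveI : NeZero P := ⟨by omega⟩
  obtain ⟨tA, htA⟩ := hA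
  obtain ⟨tB, htB⟩ := hB
  -- row permutation
  have hσ : Function.Involutive
      (fun r : Fin n × Fin P => (negFin n r.1, negFin P r.2)) := by
    intro r
    simp [negFin_invol n r.1, negFin_invol P r.2]
  set σ : Equiv.Perm (Fin n × Fin P) := Function.Involutive.toPerm _ hσ with hσdef
  -- column permutation
  have hτ : Function.Involutive
      (fun s : (Fin n ⊕ Fin n) × Fin P =>
        (Sum.elim (fun l => Sum.inr (negFin n l)) (fun l => Sum.inl (negFin n l)) s.1,
          negFin P s.2)) := by
    rintro ⟨(l | l), q⟩ <;> simp [negFin_invol n l, negFin_invol P q]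
  set τ : Equiv.Perm ((Fin n ⊕ Fin n) × Fin P) := Function.Involutive.toPerm _ hτ with hτdef
  refine ⟨permMat σ, permMat τ, permMat_isPerm σ, permMat_isPerm τ, ?_⟩
  ext ⟨j, p⟩ ⟨s, q⟩
  rw [mul_permMat, permMat_mul]
  have hτsymm : τ.symm = τ := Function.Involutive.toPerm_symm hτ
  rw [hτsymm]
  have hσapp : σ (j, p) = (negFin n j, negFin P p) := rfl
  rw [hσapp]
  cases s with
  | inl l =>
      have hτapp : τ (Sum.inl l, q) = (Sum.inr (negFin n l), negFin P q) := rfl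
      rw [hτapp]
      show circPermO P (TA j l) p q
        = circPermO P (oneg (TA (negFin n l) (negFin n j))) (negFin P p) (negFin P q)
      rw [circPermO_neg]
      congr 1
      rw [htA, htA, negFin_cast, negFin_cast]
      ring_nf
  | inr l =>
      have hτapp : τ (Sum.inr l, q) = (Sum.inl (negFin n l), negFin P q) := rfl
      rw [hτapp]
      show circPermO P (TB j l) p q
        = circPermO P (oneg (TB (negFin n l) (negFin n j))) (negFin P p) (negFin P q)
      rw [circPermO_neg]
      congr 1
      rw [htB, htB, negFin_cast, negFin_cast]
      ring_nf
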